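/- Let t ≥ 2 be an integer, let m be an even integer with m ≥ 4(t+3)+2, let n be an integer with (t−1)(m−1) ≤ n−1 < t(m−1), suppose p = ⌊(n−1)/t⌋ = m−2, and set r_3 = tp + t + 2 − n. If 2·r_3 ≤ t+3, then R(C_m, B_n^{(3)}) ≥ n + 3p + 2; that is, there is a graph on n + 3p + 1 vertices containing no cycle of length m whose complement contains no B_n^{(3)}. -/

import Mathlib

/-- `G` contains a cycle of length `m`. -/
def HasCycleLen {V : Type*} (G : SimpleGraph V) (m : ℕ) : Prop :=
  ∃ (v : V) (c : G.Walk v v), c.IsCycle ∧ c.length = m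

/-- `G` contains the book `B_n^{(k)}`: a clique on `k` vertices together with
`n` further vertices each adjacent to all of them. -/
def HasBook {V : Type*} (G : SimpleGraph V) (k n : ℕ) : Prop :=
  ∃ S T : Finset V, S.card = k ∧ T.card = n ∧ Disjoint S T ∧
    (∀ u ∈ S, ∀ v ∈ S, u ≠ v → G.Adj u v) ∧
    (∀ u ∈ S, ∀ v ∈ T, G.Adj u v)

/-- Every simple graph on `N` vertices contains `C_m` or its complement contains
`B_n^{(k)}`. The Ramsey number `R(C_m, B_n^{(k)})` is the least such `N`. -/
def RamseyProp (m k n N : ℕ) : Prop :=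
  ∀ G : SimpleGraph (Fin N), HasCycleLen G m ∨ HasBook Gᶜ k n

section Transport

variable {α β : Type*}

lemma hasCycleLen_of_comap {G : SimpleGraph β} {f : α → β} (hf : Function.Injective f) {m : ℕ}
    (h : HasCycleLen (G.comap f) m) : HasCycleLen G m := by
  obtain ⟨v, c, hc, hl⟩ := h
  refine ⟨f v, c.map ⟨f, fun h => h⟩, hc.map ?_, by simp [hl]⟩
  exact hf

lemma hasBook_of_comap {G : SimpleGraph β} (f : α ↪ β) {k n : ℕ}
    (h : HasBook (G.comap f) k n) : HasBook G k n := by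
  obtain ⟨S, T, hS, hT, hd, h1, h2⟩ := h
  refine ⟨S.map f, T.map f, by simp [hS], by simp [hT], by simp [hd], ?_, ?_⟩
  · intro u hu v hv huv
    simp only [Finset.mem_map] at hu hv
    obtain ⟨a, ha, rfl⟩ := hu; obtain ⟨b, hb, rfl⟩ := hv
    exact h1 a ha b hb (fun h => huv (by rw [h]))
  · intro u hu v hv
    simp only [Finset.mem_map] at hu hv
    obtain ⟨a, ha, rfl⟩ := hu; obtain ⟨b, hb, rfl⟩ := hv
    exact h2 a ha b hb

lemma comap_compl {G : SimpleGraph β} {f : α → β} (hf : Function.Injective f) :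
    (G.comap f)ᶜ = Gᶜ.comap f := by
  ext a b
  constructor
  · rintro ⟨hne, hna⟩; exact ⟨fun h => hne (hf h), hna⟩
  · rintro ⟨hne, hna⟩; exact ⟨fun h => hne (congrArg f h), hna⟩

end Transport

section Construction

variable (p r k : ℕ)

/-- Vertex type: `r` glued pairs of `(p+1)`-cliques, plus `k` plain `(p+1)`-cliques. -/
abbrev CVert := (Fin r × Fin (2 * p + 1)) ⊕ (Fin k × Fin (p + 1))

def CAdj : CVert p r k → CVert p r k → Prop
  | Sum.inl a, Sum.inl b =>
      a.1 = b.1 ∧ a.2 ≠ b.2 ∧ ((a.2.1 ≤ p ∧ b.2.1 ≤ p) ∨ (p ≤ a.2.1 ∧ p ≤ b.2.1))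
  | Sum.inr a, Sum.inr b => a.1 = b.1 ∧ a.2 ≠ b.2
  | _, _ => False

def CGraph : SimpleGraph (CVert p r k) where
  Adj u v := CAdj p r k u v
  symm := by
    constructor
    rintro (a | a) (b | b) h <;> simp only [CAdj] at h ⊢ <;> tauto
  loopless := by
    constructor
    rintro (a | a) h <;> simp only [CAdj] at h <;> tauto

variable {p r k}

/-- Component of a vertex. -/
def compOf : CVert p r k → Fin r ⊕ Fin k
  | Sum.inl a => Sum.inl a.1
  | Sum.inr a => Sum.inr a.1

lemma adj_compOf {u v : CVert p r k} (h : (CGraph p r k).Adj u v) : compOf u = compOf v := by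
  rcases u with a | a <;> rcases v with b | b <;>
    simp only [CGraph, CAdj, compOf] at h ⊢ <;> tauto

lemma walk_compOf {u v : CVert p r k} (W : (CGraph p r k).Walk u v) :
    ∀ w ∈ W.support, compOf w = compOf u := by
  induction W with
  | nil => intro w hw; simp at hw; subst hw; rfl
  | cons h q ih =>
    intro w hw
    rw [SimpleGraph.Walk.support_cons, List.mem_cons] at hw
    rcases hw with rfl | hw
    · rfl
    · rw [ih w hw, (adj_compOf h).symm]

end Construction
section Part2
variable {p r k : ℕ}

/-- The "low" clique of glued pair `i`. -/
def lowF (p r k : ℕ) (i : Fin r) : Finset (CVert p r k) :=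
  Finset.univ.image (fun x : Fin (p+1) => Sum.inl (i, (⟨x.1, by omega⟩ : Fin (2*p+1))))

/-- The "high" clique of glued pair `i`. -/
def highF (p r k : ℕ) (i : Fin r) : Finset (CVert p r k) :=
  Finset.univ.image (fun x : Fin (p+1) => Sum.inl (i, (⟨x.1 + p, by omega⟩ : Fin (2*p+1))))

/-- The whole glued pair `i`. -/
def fullF (p r k : ℕ) (i : Fin r) : Finset (CVert p r k) :=
  Finset.univ.image (fun x : Fin (2*p+1) => Sum.inl (i, x))

/-- Plain clique `j`. -/
def cliqueF (p r k : ℕ) (j : Fin k) : Finset (CVert p r k) :=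
  Finset.univ.image (fun x : Fin (p+1) => Sum.inr (j, x))

lemma card_lowF (i : Fin r) : (lowF p r k i).card = p + 1 := by
  rw [lowF, Finset.card_image_of_injective _ ?_, Finset.card_univ, Fintype.card_fin]
  intro a b h
  simp only [Sum.inl.injEq, Prod.mk.injEq, Fin.mk.injEq] at h
  exact Fin.ext h.2

lemma card_highF (i : Fin r) : (highF p r k i).card = p + 1 := by
  rw [highF, Finset.card_image_of_injective _ ?_, Finset.card_univ, Fintype.card_fin]
  intro a b h
  simp only [Sum.inl.injEq, Prod.mk.injEq, Fin.mk.injEq] at h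
  exact Fin.ext (by omega)

lemma card_fullF (i : Fin r) : (fullF p r k i).card = 2 * p + 1 := by
  rw [fullF, Finset.card_image_of_injective _ ?_, Finset.card_univ, Fintype.card_fin]
  intro a b h
  simp only [Sum.inl.injEq, Prod.mk.injEq] at h
  exact h.2

lemma card_cliqueF (j : Fin k) : (cliqueF p r k j).card = p + 1 := by
  rw [cliqueF, Finset.card_image_of_injective _ ?_, Finset.card_univ, Fintype.card_fin]
  intro a b h
  simp only [Sum.inr.injEq, Prod.mk.injEq] at h
  exact h.2

lemma mem_lowF {i : Fin r} {w : CVert p r k} :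
    w ∈ lowF p r k i ↔ ∃ x : Fin (2*p+1), x.1 ≤ p ∧ w = Sum.inl (i, x) := by
  constructor
  · intro hw
    rw [lowF, Finset.mem_image] at hw
    obtain ⟨x, _, rfl⟩ := hw
    exact ⟨_, by simp; omega, rfl⟩
  · rintro ⟨x, hx, rfl⟩
    rw [lowF, Finset.mem_image]
    exact ⟨⟨x.1, by omega⟩, Finset.mem_univ _, by simp⟩

lemma mem_highF {i : Fin r} {w : CVert p r k} :
    w ∈ highF p r k i ↔ ∃ x : Fin (2*p+1), p ≤ x.1 ∧ w = Sum.inl (i, x) := by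
  constructor
  · intro hw
    rw [highF, Finset.mem_image] at hw
    obtain ⟨x, _, rfl⟩ := hw
    exact ⟨_, by simp, rfl⟩
  · rintro ⟨x, hx, rfl⟩
    rw [highF, Finset.mem_image]
    refine ⟨⟨x.1 - p, by omega⟩, Finset.mem_univ _, ?_⟩
    simp only [Sum.inl.injEq, Prod.mk.injEq, Fin.mk.injEq]
    exact ⟨trivial, Fin.ext (by simp; omega)⟩

lemma mem_fullF {i : Fin r} {w : CVert p r k} :
    w ∈ fullF p r k i ↔ ∃ x : Fin (2*p+1), w = Sum.inl (i, x) := by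
  rw [fullF, Finset.mem_image]
  constructor
  · rintro ⟨x, _, rfl⟩; exact ⟨x, rfl⟩
  · rintro ⟨x, rfl⟩; exact ⟨x, Finset.mem_univ _, rfl⟩

lemma mem_cliqueF {j : Fin k} {w : CVert p r k} :
    w ∈ cliqueF p r k j ↔ ∃ x : Fin (p+1), w = Sum.inr (j, x) := by
  rw [cliqueF, Finset.mem_image]
  constructor
  · rintro ⟨x, _, rfl⟩; exact ⟨x, rfl⟩
  · rintro ⟨x, rfl⟩; exact ⟨x, Finset.mem_univ _, rfl⟩

lemma low_union_high (i : Fin r) :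
    lowF p r k i ∪ highF p r k i = fullF p r k i := by
  ext w
  rw [Finset.mem_union, mem_lowF, mem_highF, mem_fullF]
  constructor
  · rintro (⟨x, _, rfl⟩ | ⟨x, _, rfl⟩) <;> exact ⟨x, rfl⟩
  · rintro ⟨x, rfl⟩
    rcases le_or_gt x.1 p with h | h
    · exact Or.inl ⟨x, h, rfl⟩
    · exact Or.inr ⟨x, by omega, rfl⟩

/-- The shared (cut) vertex of glued pair `i`. -/
def cutV (p r k : ℕ) (i : Fin r) : CVert p r k := Sum.inl (i, ⟨p, by omega⟩)

/-- Any walk in a glued pair from the low side (strictly) to the high side (strictly)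
passes through the cut vertex. -/
lemma crossing {u v : CVert p r k} (W : (CGraph p r k).Walk u v) :
    ∀ (i : Fin r) (a b : Fin (2*p+1)), u = Sum.inl (i, a) → v = Sum.inl (i, b) →
      a.1 < p → p < b.1 → cutV p r k i ∈ W.support := by
  induction W with
  | nil =>
    rintro i a b rfl h2 ha hb
    simp only [Sum.inl.injEq, Prod.mk.injEq] at h2
    rw [h2.2] at ha
    omega
  | @cons u u' v hadj q ih =>
    rintro i a b rfl rfl ha hb
    rcases u' with ⟨i', a'⟩ | c
    · have hcomp : i = i' ∧ (a ≠ a') ∧ ((a.1 ≤ p ∧ a'.1 ≤ p) ∨ (p ≤ a.1 ∧ p ≤ a'.1)) := hadj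
      obtain ⟨rfl, -, hside⟩ := hcomp
      have ha' : a'.1 ≤ p := by omega
      rcases eq_or_lt_of_le ha' with heq | hlt
      · have : (Sum.inl (i, a') : CVert p r k) = cutV p r k i := by
          simp only [cutV, Sum.inl.injEq, Prod.mk.injEq]
          exact ⟨trivial, Fin.ext heq⟩
        rw [SimpleGraph.Walk.support_cons]
        exact List.mem_cons_of_mem _ (this ▸ q.start_mem_support)
      · rw [SimpleGraph.Walk.support_cons]
        exact List.mem_cons_of_mem _ (ih i a' b rfl rfl hlt hb)
    · exact absurd hadj (by simp [CGraph, CAdj])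

end Part2
section Part3
variable {p r k : ℕ}

open SimpleGraph Walk

lemma tail_card_bound {v : CVert p r k} {c : (CGraph p r k).Walk v v}
    (hc : c.IsCycle) (F : Finset (CVert p r k)) (hsub : ∀ w ∈ c.support, w ∈ F) :
    c.length ≤ F.card := by
  have hnd := hc.support_nodup
  have hlen : c.support.tail.length = c.length := by
    have := c.length_support
    simp [List.length_tail, this]
  calc c.length = c.support.tail.toFinset.card := by
        rw [List.toFinset_card_of_nodup hnd, hlen]
    _ ≤ F.card := by
        apply Finset.card_le_card
        intro x hx
        rw [List.mem_toFinset] at hx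
        exact hsub x (List.mem_of_mem_tail hx)

lemma noCycle : ¬ HasCycleLen (CGraph p r k) (p + 2) := by
  rintro ⟨v, c, hc, hlen⟩
  classical
  have hcomp : ∀ w ∈ c.support, compOf w = compOf v := walk_compOf c
  rcases hv : compOf v with i | j
  case inr =>
    have hsub : ∀ w ∈ c.support, w ∈ cliqueF p r k j := by
      intro w hw
      have := hcomp w hw
      rw [hv] at this
      rcases w with a | ⟨j', x⟩
      · exact absurd this (by simp [compOf])
      · have : j' = j := by
          have h2 : (Sum.inr j' : Fin r ⊕ Fin k) = Sum.inr j := this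
          simpa using h2
        subst this
        exact mem_cliqueF.2 ⟨x, rfl⟩
    have := tail_card_bound hc _ hsub
    rw [hlen, card_cliqueF] at this
    omega
  case _ =>
    have hsub : ∀ w ∈ c.support, ∃ x : Fin (2*p+1), w = Sum.inl (i, x) := by
      intro w hw
      have := hcomp w hw
      rw [hv] at this
      rcases w with ⟨i', x⟩ | a
      · have : i' = i := by
          have h2 : (Sum.inl i' : Fin r ⊕ Fin k) = Sum.inl i := this
          simpa using h2
        subst this
        exact ⟨x, rfl⟩
      · exact absurd this (by simp [compOf])
    rcases Classical.em (∀ w ∈ c.support, w ∈ lowF p r k i) with hlow | hlow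
    · have := tail_card_bound hc _ hlow
      rw [hlen, card_lowF] at this; omega
    rcases Classical.em (∀ w ∈ c.support, w ∈ highF p r k i) with hhigh | hhigh
    · have := tail_card_bound hc _ hhigh
      rw [hlen, card_highF] at this; omega
    push_neg at hlow hhigh
    obtain ⟨u, hu, hu2⟩ := hlow
    obtain ⟨w, hw, hw2⟩ := hhigh
    obtain ⟨xu, rfl⟩ := hsub u hu
    obtain ⟨xw, rfl⟩ := hsub w hw
    have hxu : p < xu.1 := by
      by_contra h
      exact hu2 (mem_lowF.2 ⟨xu, by omega, rfl⟩)
    have hxw : xw.1 < p := by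
      by_contra h
      exact hw2 (mem_highF.2 ⟨xw, by omega, rfl⟩)
    -- rotate the cycle to start at the low vertex w
    set c' := c.rotate _ hw with hc'def
    have hc' : c'.IsCycle := hc.rotate hw
    have hu' : Sum.inl (i, xu) ∈ c'.support := by
      rw [hc'def]
      unfold SimpleGraph.Walk.rotate
      rw [SimpleGraph.Walk.mem_support_append_iff]
      rw [← c.take_spec hw, SimpleGraph.Walk.mem_support_append_iff] at hu
      tauto
    set W1 := c'.takeUntil _ hu' with hW1def
    set W2 := c'.dropUntil _ hu' with hW2def
    have hx1 : cutV p r k i ∈ W1.support :=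
      crossing W1 i xw xu rfl rfl hxw hxu
    have hx2 : cutV p r k i ∈ W2.support := by
      have := crossing W2.reverse i xw xu rfl rfl hxw hxu
      rw [SimpleGraph.Walk.support_reverse, List.mem_reverse] at this
      exact this
    have hcutw : cutV p r k i ≠ Sum.inl (i, xw) := by
      simp only [cutV, ne_eq, Sum.inl.injEq, Prod.mk.injEq, not_and]
      intro _ h
      have := congrArg Fin.val h
      simp at this; omega
    have hcutu : cutV p r k i ≠ Sum.inl (i, xu) := by
      simp only [cutV, ne_eq, Sum.inl.injEq, Prod.mk.injEq, not_and]
      intro _ h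
      have := congrArg Fin.val h
      simp at this; omega
    have hx1' : cutV p r k i ∈ W1.support.tail := by
      rw [W1.support_eq_cons, List.mem_cons] at hx1
      exact hx1.resolve_left hcutw
    have hx2' : cutV p r k i ∈ W2.support.tail := by
      rw [W2.support_eq_cons, List.mem_cons] at hx2
      exact hx2.resolve_left hcutu
    have hspec := c'.take_spec hu'
    have hsupp : c'.support = W1.support ++ W2.support.tail := by
      rw [← hspec, SimpleGraph.Walk.support_append]
    have htail : c'.support.tail = W1.support.tail ++ W2.support.tail := by
      rw [hsupp, W1.support_eq_cons]
      rfl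
    have hnd := hc'.support_nodup
    rw [htail] at hnd
    exact (List.disjoint_of_nodup_append hnd) hx1' hx2'

end Part3
section Part4
variable {p r k : ℕ}

/-- A canonical `(p+1)`-sized closed-neighborhood finset of a vertex. -/
def nb : CVert p r k → Finset (CVert p r k)
  | Sum.inl (i, a) => if a.1 ≤ p then lowF p r k i else highF p r k i
  | Sum.inr (j, _) => cliqueF p r k j

lemma card_nb (v : CVert p r k) : (nb v).card = p + 1 := by
  rcases v with ⟨i, a⟩ | ⟨j, a⟩
  · rw [nb]
    split
    · exact card_lowF i
    · exact card_highF i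
  · rw [nb]; exact card_cliqueF j

lemma nb_comp {u v : CVert p r k} (hu : u ∈ nb v) : compOf u = compOf v := by
  rcases v with ⟨i, a⟩ | ⟨j, a⟩
  · rw [nb] at hu
    split at hu
    · obtain ⟨x, _, rfl⟩ := mem_lowF.1 hu; rfl
    · obtain ⟨x, _, rfl⟩ := mem_highF.1 hu; rfl
  · rw [nb] at hu
    obtain ⟨x, rfl⟩ := mem_cliqueF.1 hu; rfl

lemma nb_adj {u v : CVert p r k} (hu : u ∈ nb v) : u = v ∨ (CGraph p r k).Adj v u := by
  rcases v with ⟨i, a⟩ | ⟨j, a⟩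
  · by_cases h : a.1 ≤ p
    · rw [nb, if_pos h] at hu
      obtain ⟨x, hx, rfl⟩ := mem_lowF.1 hu
      rcases eq_or_ne x a with rfl | hne
      · exact Or.inl rfl
      · exact Or.inr ⟨rfl, hne.symm, Or.inl ⟨h, hx⟩⟩
    · rw [nb, if_neg h] at hu
      obtain ⟨x, hx, rfl⟩ := mem_highF.1 hu
      rcases eq_or_ne x a with rfl | hne
      · exact Or.inl rfl
      · exact Or.inr ⟨rfl, hne.symm, Or.inr ⟨le_of_not_ge h, hx⟩⟩
  · rw [nb] at hu
    obtain ⟨x, rfl⟩ := mem_cliqueF.1 hu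
    rcases eq_or_ne x a with rfl | hne
    · exact Or.inl rfl
    · exact Or.inr ⟨rfl, (hne.symm : a ≠ x)⟩

lemma nb_disj {u v : CVert p r k} (h : compOf u ≠ compOf v) : Disjoint (nb u) (nb v) := by
  rw [Finset.disjoint_left]
  intro a hau hav
  exact h ((nb_comp hau).symm.trans (nb_comp hav))

lemma comp_eq_cases {u v : CVert p r k} (h : compOf u = compOf v) :
    (∃ i a b, u = Sum.inl (i, a) ∧ v = Sum.inl (i, b)) ∨
    (∃ j a b, u = Sum.inr (j, a) ∧ v = Sum.inr (j, b)) := by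
  rcases u with ⟨i, a⟩ | ⟨j, a⟩ <;> rcases v with ⟨i', b⟩ | ⟨j', b⟩ <;>
    simp only [compOf, Sum.inl.injEq, Sum.inr.injEq, reduceCtorEq] at h
  · exact Or.inl ⟨i, a, b, rfl, by rw [h]⟩
  · exact Or.inr ⟨j, a, b, rfl, by rw [h]⟩

lemma pair_sides {i : Fin r} {a b : Fin (2*p+1)} (hne : a ≠ b)
    (hna : ¬ (CGraph p r k).Adj (Sum.inl (i, a)) (Sum.inl (i, b))) :
    (a.1 < p ∧ p < b.1) ∨ (b.1 < p ∧ p < a.1) := by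
  have h2 : ¬ ((a.1 ≤ p ∧ b.1 ≤ p) ∨ (p ≤ a.1 ∧ p ≤ b.1)) := fun hc => hna ⟨rfl, hne, hc⟩
  omega

lemma pair_union {i : Fin r} {a b : Fin (2*p+1)}
    (hab : (a.1 < p ∧ p < b.1) ∨ (b.1 < p ∧ p < a.1)) :
    nb (Sum.inl (i, a) : CVert p r k) ∪ nb (Sum.inl (i, b)) = fullF p r k i := by
  rcases hab with ⟨ha, hb⟩ | ⟨hb, ha⟩
  · rw [nb, nb, if_pos (by omega), if_neg (by omega)]
    exact low_union_high i
  · rw [nb, nb, if_neg (by omega), if_pos (by omega)]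
    rw [Finset.union_comm]
    exact low_union_high i

lemma pair_card {u v : CVert p r k} (hcomp : compOf u = compOf v) (hne : u ≠ v)
    (hna : ¬ (CGraph p r k).Adj u v) : (nb u ∪ nb v).card = 2 * p + 1 := by
  rcases comp_eq_cases hcomp with ⟨i, a, b, rfl, rfl⟩ | ⟨j, a, b, rfl, rfl⟩
  · have hab : a ≠ b := fun h => hne (by rw [h])
    rw [pair_union (pair_sides hab hna)]
    exact card_fullF i
  · exact absurd ⟨rfl, (fun h => hne (by rw [h]) : a ≠ b)⟩ hna

lemma triple_impossible {u v w : CVert p r k}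
    (h12 : compOf u = compOf v) (h13 : compOf u = compOf w)
    (hne12 : u ≠ v) (hne13 : u ≠ w) (hne23 : v ≠ w)
    (hna12 : ¬ (CGraph p r k).Adj u v) (hna13 : ¬ (CGraph p r k).Adj u w)
    (hna23 : ¬ (CGraph p r k).Adj v w) : False := by
  rcases comp_eq_cases h12 with ⟨i, a, b, rfl, rfl⟩ | ⟨j, a, b, rfl, rfl⟩
  · rcases comp_eq_cases h13 with ⟨i', a', c, he, rfl⟩ | ⟨j, a', c, he, rfl⟩
    · obtain ⟨rfl, rfl⟩ : i' = i ∧ a' = a := by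
        simp only [Sum.inl.injEq, Prod.mk.injEq] at he; exact ⟨he.1.symm, he.2.symm⟩
      have s12 := pair_sides (fun h => hne12 (by rw [h])) hna12
      have s13 := pair_sides (fun h => hne13 (by rw [h])) hna13
      have s23 := pair_sides (fun h => hne23 (by rw [h])) hna23
      omega
    · exact absurd he (by simp)
  · exact absurd ⟨rfl, (fun h => hne12 (by rw [h]) : a ≠ b)⟩ hna12

lemma noBook (n : ℕ) (hM : Fintype.card (CVert p r k) = n + 3 * p + 1) :
    ¬ HasBook (CGraph p r k)ᶜ 3 n := by
  rintro ⟨S, T, hS3, hTn, hdisj, hcl, hbk⟩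
  obtain ⟨s1, s2, s3, h12, h13, h23, rfl⟩ := Finset.card_eq_three.mp hS3
  have m1 : s1 ∈ ({s1, s2, s3} : Finset (CVert p r k)) := by simp
  have m2 : s2 ∈ ({s1, s2, s3} : Finset (CVert p r k)) := by simp
  have m3 : s3 ∈ ({s1, s2, s3} : Finset (CVert p r k)) := by simp
  have na12 : ¬ (CGraph p r k).Adj s1 s2 := (hcl s1 m1 s2 m2 h12).2
  have na13 : ¬ (CGraph p r k).Adj s1 s3 := (hcl s1 m1 s3 m3 h13).2
  have na23 : ¬ (CGraph p r k).Adj s2 s3 := (hcl s2 m2 s3 m3 h23).2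
  set U : Finset (CVert p r k) := nb s1 ∪ nb s2 ∪ nb s3 with hU
  have hUcard : 3 * p + 2 ≤ U.card := by
    by_cases e12 : compOf s1 = compOf s2
    · by_cases e13 : compOf s1 = compOf s3
      · exact absurd (triple_impossible e12 e13 h12 h13 h23 na12 na13 na23) (by simp)
      · have hd : Disjoint (nb s1 ∪ nb s2) (nb s3) := by
          rw [Finset.disjoint_union_left]
          exact ⟨nb_disj (fun h => e13 h), nb_disj (fun h => e13 (e12.trans h))⟩
        rw [hU, Finset.card_union_of_disjoint hd, pair_card e12 h12 na12, card_nb]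
        omega
    · by_cases e13 : compOf s1 = compOf s3
      · have e23 : compOf s2 ≠ compOf s3 := fun h => e12 (e13.trans h.symm)
        have hd : Disjoint (nb s1 ∪ nb s3) (nb s2) := by
          rw [Finset.disjoint_union_left]
          exact ⟨nb_disj (fun h => e12 h), nb_disj e23.symm⟩
        rw [hU, Finset.union_right_comm, Finset.card_union_of_disjoint hd,
          pair_card e13 h13 na13, card_nb]
        omega
      · by_cases e23 : compOf s2 = compOf s3
        · have hd : Disjoint (nb s1) (nb s2 ∪ nb s3) := by
            rw [Finset.disjoint_union_right]
            exact ⟨nb_disj e12, nb_disj e13⟩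
          rw [hU, Finset.union_assoc, Finset.card_union_of_disjoint hd,
            pair_card e23 h23 na23, card_nb]
          omega
        · have hd1 : Disjoint (nb s1) (nb s2) := nb_disj e12
          have hd2 : Disjoint (nb s1 ∪ nb s2) (nb s3) := by
            rw [Finset.disjoint_union_left]
            exact ⟨nb_disj e13, nb_disj e23⟩
          rw [hU, Finset.card_union_of_disjoint hd2, Finset.card_union_of_disjoint hd1,
            card_nb, card_nb, card_nb]
          omega
  have hUT : Disjoint U T := by
    rw [Finset.disjoint_left]
    intro a haU haT
    have : ∃ s ∈ ({s1, s2, s3} : Finset (CVert p r k)), a ∈ nb s := by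
      rw [hU, Finset.mem_union, Finset.mem_union] at haU
      rcases haU with (h | h) | h
      exacts [⟨s1, m1, h⟩, ⟨s2, m2, h⟩, ⟨s3, m3, h⟩]
    obtain ⟨s, hs, hans⟩ := this
    rcases nb_adj hans with rfl | hadj
    · exact Finset.disjoint_left.mp hdisj hs haT
    · exact ((hbk s hs a haT).2) hadj
  have hle : U.card + T.card ≤ Fintype.card (CVert p r k) := by
    rw [← Finset.card_union_of_disjoint hUT]
    exact Finset.card_le_univ _
  rw [hM, hTn] at hle
  omega

end Part4
theorem stmt8 (t m n p : ℕ) (ht : 2 ≤ t) (hmEven : Even m)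
    (hm : 4 * (t + 3) + 2 ≤ m)
    (hn1 : (t - 1) * (m - 1) ≤ n - 1) (hn2 : n - 1 < t * (m - 1))
    (hp : p = (n - 1) / t) (hpm : p = m - 2)
    (hcase : 2 * (t * p + t + 2 - n) ≤ t + 3) :
    (∀ N : ℕ, RamseyProp m 3 n N → n + 3 * p + 2 ≤ N) ∧
    ∃ G : SimpleGraph (Fin (n + 3 * p + 1)),
      ¬ HasCycleLen G m ∧ ¬ HasBook Gᶜ 3 n := by
  have ht0 : 0 < t := by omega
  have hm2 : m = p + 2 := by omega
  obtain ⟨A, hA⟩ : ∃ A, A = t * p := ⟨_, rfl⟩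
  rw [← hA] at hcase
  have hmod := Nat.div_add_mod (n - 1) t
  rw [← hp, ← hA] at hmod
  have hmodlt : (n - 1) % t < t := Nat.mod_lt _ ht0
  have hA2 : p ≤ A := by rw [hA]; exact Nat.le_mul_of_pos_left p ht0
  have hp20 : 20 ≤ p := by omega
  set r := A + t + 2 - n with hrdef
  set k := t + 3 - 2 * r with hkdef
  have hr : n + r = A + t + 2 := by omega
  have hk : 2 * r + k = t + 3 := by omega
  have hM : r * (2 * p + 1) + k * (p + 1) = n + 3 * p + 1 := by
    have e1 : r * (2 * p + 1) + k * (p + 1) + r = (2 * r + k) * (p + 1) := by ring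
    have e2 : (2 * r + k) * (p + 1) = (t + 3) * (p + 1) := by rw [hk]
    have e3 : (t + 3) * (p + 1) = t * p + t + 2 + (3 * p + 1) := by ring
    rw [← hA] at e3
    have e4 : A + t + 2 + (3 * p + 1) = n + 3 * p + 1 + r := by omega
    exact Nat.add_right_cancel ((e1.trans e2).trans (e3.trans e4))
  have hcard : Fintype.card (CVert p r k) = n + 3 * p + 1 := by
    rw [← hM]
    simp [CVert]
  let e : CVert p r k ≃ Fin (n + 3 * p + 1) := Fintype.equivFinOfCardEq hcard
  let G0 : SimpleGraph (Fin (n + 3 * p + 1)) := (CGraph p r k).comap e.symm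
  have hnc : ¬ HasCycleLen G0 m := by
    intro h
    rw [hm2] at h
    exact noCycle (hasCycleLen_of_comap e.symm.injective h)
  have hnb : ¬ HasBook G0ᶜ 3 n := by
    intro h
    rw [show G0ᶜ = ((CGraph p r k)ᶜ).comap e.symm from comap_compl e.symm.injective] at h
    exact noBook n hcard (hasBook_of_comap ⟨e.symm, e.symm.injective⟩ h)
  refine ⟨?_, ⟨G0, hnc, hnb⟩⟩
  intro N hN
  by_contra hlt
  push_neg at hlt
  have hle : N ≤ n + 3 * p + 1 := by omega
  have hfinj : Function.Injective (Fin.castLE hle) := Fin.castLE_injective hle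
  rcases hN (G0.comap (Fin.castLE hle)) with hcyc | hbook
  · exact hnc (hasCycleLen_of_comap hfinj hcyc)
  · rw [show (G0.comap (Fin.castLE hle))ᶜ = (G0ᶜ).comap (Fin.castLE hle) from
      comap_compl hfinj] at hbook
    exact hnb (hasBook_of_comap ⟨Fin.castLE hle, hfinj⟩ hbook)
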